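/- Two invertible fractional ideals with the same coefficient ring R are weakly equivalent, while an invertible ideal and a non-invertible ideal with the same coefficient ring R are never weakly equivalent. -/
import Mathlib


/-- The colon (quotient) of two `ℤ`-submodules of a field `K`:
`(J : I) = {x ∈ K : x I ⊆ J}`. -/
def colonSub {K : Type*} [Field K] (J I : Submodule ℤ K) : Submodule ℤ K where
  carrier := {x : K | ∀ y ∈ I, x * y ∈ J}
  add_mem' := by
    intro a b ha hb y hy
    have := J.add_mem (ha y hy) (hb y hy)
    simpa [add_mul] using this
  zero_mem' := by intro y hy; simp
  smul_mem' := by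
    intro c x hx y hy
    rw [smul_mul_assoc]
    exact J.smul_mem c (hx y hy)

/-- An order in a number field `K`: a subring of `K` which is a finitely generated
`ℤ`-module of full rank (it spans `K` over `ℚ`). -/
structure IsOrder {K : Type*} [Field K] [Algebra ℚ K] (R : Submodule ℤ K) : Prop where
  one_mem : (1 : K) ∈ R
  mul_le : R * R ≤ R
  fg : R.FG
  spans : Submodule.span ℚ (R : Set K) = ⊤

/-- A fractional `ℤ[β]`-ideal: a nonzero finitely generated `ℤ`-submodule of `K`
stable under multiplication by `ℤ[β]`. -/
def IsZBetaIdeal {K : Type*} [Field K] (β : K) (I : Submodule ℤ K) : Prop :=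
  I ≠ ⊥ ∧ I.FG ∧ Submodule.span ℤ (Set.range fun i : ℕ => β ^ i) * I ≤ I

/-- Two fractional ideals `I` and `J` are weakly equivalent if there exist fractional
ideals `X`, `Y` and an order `R` such that `IX = J`, `JY = I` and `XY = R`. -/
def WeakEquiv {K : Type*} [Field K] [Algebra ℚ K] (I J : Submodule ℤ K) : Prop :=
  ∃ X Y R : Submodule ℤ K, IsOrder R ∧ I * X = J ∧ J * Y = I ∧ X * Y = R

lemma mem_colonSub {K : Type*} [Field K] {J I : Submodule ℤ K} {x : K} :
    x ∈ colonSub J I ↔ ∀ y ∈ I, x * y ∈ J := Iff.rfl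

/-- `R * J = J` whenever `colonSub J J = R`. -/
lemma coeff_mul_self {K : Type*} [Field K] {R J : Submodule ℤ K}
    (h1 : (1 : K) ∈ R) (hJJ : colonSub J J = R) : R * J = J := by
  apply le_antisymm
  · refine Submodule.mul_le.mpr fun r hr y hy => ?_
    rw [← hJJ] at hr
    exact hr y hy
  · intro y hy
    simpa using Submodule.mul_mem_mul h1 hy

lemma order_mul_self {K : Type*} [Field K] [Algebra ℚ K] {R : Submodule ℤ K}
    (hR : IsOrder R) : R * R = R := by
  apply le_antisymm hR.mul_le
  intro y hy
  simpa using Submodule.mul_mem_mul hR.one_mem hy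

/-- If `J * Z = R` for some `Z`, then `J * colonSub R J = R`. -/
lemma invertible_of_exists {K : Type*} [Field K] {R J Z : Submodule ℤ K}
    (h : J * Z = R) : J * colonSub R J = R := by
  apply le_antisymm
  · refine Submodule.mul_le.mpr fun y hy z hz => ?_
    rw [mul_comm]
    exact hz y hy
  · have hZ : Z ≤ colonSub R J := by
      intro z hz w hw
      have : w * z ∈ J * Z := Submodule.mul_mem_mul hw hz
      rw [h] at this
      rwa [mul_comm]
    calc R = J * Z := h.symm
      _ ≤ J * colonSub R J := mul_le_mul_right hZ J

/-- Two invertible fractional ideals with the same coefficient ring `R` are weakly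
equivalent, while an invertible ideal and a non-invertible ideal with the same coefficient
ring `R` are never weakly equivalent. Here an ideal `X` with coefficient ring `R` is
invertible if `X (R : X) = R`. -/
theorem stmt7 {K : Type*} [Field K] [NumberField K]
    (R : Submodule ℤ K) (hR : IsOrder R)
    (I J : Submodule ℤ K)
    (hI0 : I ≠ ⊥) (hIfg : I.FG) (hII : colonSub I I = R)
    (hJ0 : J ≠ ⊥) (hJfg : J.FG) (hJJ : colonSub J J = R) :
    ((I * colonSub R I = R ∧ J * colonSub R J = R) → WeakEquiv I J) ∧
    ((I * colonSub R I = R ∧ ¬ (J * colonSub R J = R)) → ¬ WeakEquiv I J) := by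
  constructor
  · rintro ⟨hI, hJ⟩
    refine ⟨colonSub R I * J, colonSub R J * I, R, hR, ?_, ?_, ?_⟩
    · rw [← mul_assoc, hI, coeff_mul_self hR.one_mem hJJ]
    · rw [← mul_assoc, hJ, coeff_mul_self hR.one_mem hII]
    · calc colonSub R I * J * (colonSub R J * I)
          = (I * colonSub R I) * (J * colonSub R J) := by ring
        _ = R := by rw [hI, hJ, order_mul_self hR]
  · rintro ⟨hI, hJ⟩ ⟨X, Y, R', _, hIX, hJY, _⟩
    apply hJ
    apply invertible_of_exists (Z := Y * colonSub R I)
    rw [← mul_assoc, hJY, hI]
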